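/- Let α < β and γ be real numbers with α < γ, let C > 0, and let c, c' ∈ ℝ. Suppose that ∫_r^{2r} (c·t^α + c'·t^β)²·t^{−1} dt ≤ C·r^{2γ} for every r ∈ (0, 1). Then c = 0. -/

import Mathlib

open MeasureTheory Set

/-- Coefficient vanishing (behind Lemma 2.6): if `α < β`, `α < γ`, `C > 0` and
`∫_r^{2r} (c t^α + c' t^β)² t⁻¹ dt ≤ C r^{2γ}` for all `r ∈ (0,1)`, then `c = 0`. -/
theorem coefficient_vanishing
    (α β γ C : ℝ) (hαβ : α < β) (hαγ : α < γ) (hC : 0 < C) (c c' : ℝ)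
    (h : ∀ r ∈ Ioo (0 : ℝ) 1,
      (∫ t in Ioc r (2 * r), (c * t ^ α + c' * t ^ β) ^ 2 * t⁻¹)
        ≤ C * r ^ (2 * γ)) :
    c = 0 := by
  by_contra hc
  have hcabs : 0 < |c| := abs_pos.mpr hc
  have hc2 : 0 < c ^ 2 / 4 := by positivity
  set δ : ℝ := β - α with hδdef
  have hδ : 0 < δ := sub_pos.mpr hαβ
  set ε : ℝ := 2 * (γ - α) with hεdef
  have hε : 0 < ε := by have := sub_pos.mpr hαγ; positivity
  set m : ℝ := min 1 (2 ^ (2 * α - 1)) with hmdef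
  have hm0 : 0 < m := lt_min one_pos (Real.rpow_pos_of_pos two_pos _)
  -- choose a small radius r
  have htend1 : Filter.Tendsto (fun r : ℝ => |c'| * (2 * r) ^ δ)
      (nhdsWithin 0 (Ioi 0)) (nhds 0) := by
    have h2r : Filter.Tendsto (fun r : ℝ => 2 * r) (nhdsWithin 0 (Ioi 0)) (nhds 0) := by
      have : Filter.Tendsto (fun r : ℝ => 2 * r) (nhds 0) (nhds 0) := by
        have : Continuous (fun r : ℝ => 2 * r) := continuous_const.mul continuous_id
        simpa using this.tendsto 0
      exact this.mono_left nhdsWithin_le_nhds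
    have hpow : Filter.Tendsto (fun x : ℝ => x ^ δ) (nhds 0) (nhds 0) := by
      have := (Real.continuousAt_rpow_const 0 δ (Or.inr hδ.le)).tendsto
      simpa [Real.zero_rpow hδ.ne'] using this
    have := (hpow.comp h2r).const_mul |c'|
    simpa using this
  have htend2 : Filter.Tendsto (fun r : ℝ => C * r ^ ε)
      (nhdsWithin 0 (Ioi 0)) (nhds 0) := by
    have hpow : Filter.Tendsto (fun x : ℝ => x ^ ε) (nhds 0) (nhds 0) := by
      have := (Real.continuousAt_rpow_const 0 ε (Or.inr hε.le)).tendsto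
      simpa [Real.zero_rpow hε.ne'] using this
    have := (hpow.mono_left (nhdsWithin_le_nhds :
      nhdsWithin (0:ℝ) (Ioi 0) ≤ nhds 0)).const_mul C
    simpa using this
  have hev1 : ∀ᶠ r in nhdsWithin 0 (Ioi 0), |c'| * (2 * r) ^ δ < |c| / 2 :=
    htend1.eventually_lt_const (by positivity)
  have hev2 : ∀ᶠ r in nhdsWithin 0 (Ioi 0), C * r ^ ε < c ^ 2 / 4 * m :=
    htend2.eventually_lt_const (by positivity)
  have hev3 : ∀ᶠ r in nhdsWithin (0:ℝ) (Ioi 0), r ∈ Ioo (0:ℝ) 1 :=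
    Ioo_mem_nhdsGT_of_mem ⟨le_refl 0, one_pos⟩
  obtain ⟨r, hA, hB, hrIoo⟩ := (hev1.and (hev2.and hev3)).exists
  have hr0 : 0 < r := hrIoo.1
  -- pointwise lower bound on the integrand
  set L : ℝ := c ^ 2 / 4 * m * r ^ (2 * α - 1) with hLdef
  have hpt : ∀ t ∈ Ioc r (2 * r), L ≤ (c * t ^ α + c' * t ^ β) ^ 2 * t⁻¹ := by
    intro t ht
    have ht0 : 0 < t := lt_trans hr0 ht.1
    have htα : 0 < t ^ α := Real.rpow_pos_of_pos ht0 α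
    -- |c'| t^β ≤ (|c|/2) t^α
    have hstep1 : |c'| * t ^ δ ≤ |c| / 2 := by
      have h1 : t ^ δ ≤ (2 * r) ^ δ := Real.rpow_le_rpow ht0.le ht.2 hδ.le
      nlinarith [abs_nonneg c', mul_le_mul_of_nonneg_left h1 (abs_nonneg c')]
    have hstep2 : |c'| * t ^ β ≤ |c| / 2 * t ^ α := by
      have hβs : t ^ β = t ^ δ * t ^ α := by
        rw [← Real.rpow_add ht0, hδdef]; ring_nf
      rw [hβs, ← mul_assoc]
      exact mul_le_mul_of_nonneg_right hstep1 htα.le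
    -- lower bound on the absolute value
    have habs : |c| / 2 * t ^ α ≤ |c * t ^ α + c' * t ^ β| := by
      have h1 : |c| * t ^ α ≤ |c * t ^ α + c' * t ^ β| + |c'| * t ^ β := by
        have := abs_add_le (c * t ^ α + c' * t ^ β) (-(c' * t ^ β))
        simp only [add_neg_cancel_right, abs_neg, abs_mul,
          abs_of_pos htα, abs_of_pos (Real.rpow_pos_of_pos ht0 β)] at this
        linarith
      linarith
    have hsq : (c ^ 2 / 4) * t ^ (2 * α) ≤ (c * t ^ α + c' * t ^ β) ^ 2 := by
      have h2 : (|c| / 2 * t ^ α) ^ 2 ≤ |c * t ^ α + c' * t ^ β| ^ 2 := by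
        have := mul_self_le_mul_self (by positivity) habs
        simpa [pow_two] using this
      have h3 : (t ^ α) ^ 2 = t ^ (2 * α) := by
        rw [pow_two, ← Real.rpow_add ht0]; ring_nf
      calc (c ^ 2 / 4) * t ^ (2 * α) = (|c| / 2 * t ^ α) ^ 2 := by
            rw [mul_pow, h3, div_pow, sq_abs]; ring
        _ ≤ |c * t ^ α + c' * t ^ β| ^ 2 := h2
        _ = (c * t ^ α + c' * t ^ β) ^ 2 := sq_abs _
    -- t^(2α-1) ≥ m r^(2α-1)
    have hrt : m * r ^ (2 * α - 1) ≤ t ^ (2 * α - 1) := by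
      rcases le_or_gt 0 (2 * α - 1) with he | he
      · have h1 : r ^ (2 * α - 1) ≤ t ^ (2 * α - 1) :=
          Real.rpow_le_rpow hr0.le ht.1.le he
        have h2 : m ≤ 1 := min_le_left _ _
        nlinarith [Real.rpow_pos_of_pos hr0 (2 * α - 1)]
      · have h1 : (2 * r) ^ (2 * α - 1) ≤ t ^ (2 * α - 1) :=
          Real.rpow_le_rpow_of_nonpos ht0 ht.2 he.le
        have h2 : (2 * r) ^ (2 * α - 1) = 2 ^ (2 * α - 1) * r ^ (2 * α - 1) :=
          Real.mul_rpow (by norm_num) hr0.le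
        have h3 : m ≤ 2 ^ (2 * α - 1) := min_le_right _ _
        nlinarith [Real.rpow_pos_of_pos hr0 (2 * α - 1)]
    have hfin : L ≤ c ^ 2 / 4 * t ^ (2 * α - 1) := by
      rw [hLdef]
      nlinarith
    have heq : c ^ 2 / 4 * t ^ (2 * α - 1) = (c ^ 2 / 4) * t ^ (2 * α) * t⁻¹ := by
      rw [mul_assoc]
      congr 1
      rw [Real.rpow_sub ht0, Real.rpow_one, div_eq_mul_inv]
    calc L ≤ c ^ 2 / 4 * t ^ (2 * α - 1) := hfin
      _ = (c ^ 2 / 4) * t ^ (2 * α) * t⁻¹ := heq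
      _ ≤ (c * t ^ α + c' * t ^ β) ^ 2 * t⁻¹ :=
          mul_le_mul_of_nonneg_right hsq (inv_nonneg.mpr ht0.le)
  -- integrability
  have hint : IntegrableOn (fun t => (c * t ^ α + c' * t ^ β) ^ 2 * t⁻¹)
      (Ioc r (2 * r)) := by
    have hcont : ContinuousOn (fun t => (c * t ^ α + c' * t ^ β) ^ 2 * t⁻¹)
        (Icc r (2 * r)) := by
      intro t ht
      have ht0 : t ≠ 0 := (lt_of_lt_of_le hr0 ht.1).ne'
      have h1 := Real.continuousAt_rpow_const t α (Or.inl ht0)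
      have h2 := Real.continuousAt_rpow_const t β (Or.inl ht0)
      have h3 : ContinuousAt (fun t : ℝ => t⁻¹) t := continuousAt_inv₀ ht0
      exact ((((continuousAt_const.mul h1).add (continuousAt_const.mul h2)).pow 2).mul
        h3).continuousWithinAt
    exact (hcont.integrableOn_Icc).mono_set Ioc_subset_Icc_self
  -- integrate the constant lower bound
  have hvol : (volume (Ioc r (2 * r))).toReal = r := by
    rw [Real.volume_Ioc, ENNReal.toReal_ofReal (by linarith)]
    ring
  have hmono : L * r ≤ ∫ t in Ioc r (2 * r), (c * t ^ α + c' * t ^ β) ^ 2 * t⁻¹ := by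
    have hconst : IntegrableOn (fun _ : ℝ => L) (Ioc r (2 * r)) :=
      integrableOn_const (by rw [Real.volume_Ioc]; exact ENNReal.ofReal_ne_top)
    have := setIntegral_mono_on hconst hint measurableSet_Ioc hpt
    rwa [setIntegral_const, measureReal_def, hvol, smul_eq_mul, mul_comm] at this
  have hup := h r hrIoo
  -- final contradiction
  have hrε : 0 < r ^ ε := Real.rpow_pos_of_pos hr0 ε
  have hr2α : 0 < r ^ (2 * α) := Real.rpow_pos_of_pos hr0 (2 * α)
  have hLr : L * r = c ^ 2 / 4 * m * r ^ (2 * α) := by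
    have h1 : r ^ (2 * α - 1) * r = r ^ (2 * α) := by
      rw [← Real.rpow_add_one hr0.ne']; ring_nf
    rw [hLdef, mul_assoc, h1]
  have hgam : C * r ^ (2 * γ) = C * r ^ ε * r ^ (2 * α) := by
    rw [mul_assoc, ← Real.rpow_add hr0]
    congr 2
    rw [hεdef]; ring
  have hkey : c ^ 2 / 4 * m * r ^ (2 * α) ≤ C * r ^ ε * r ^ (2 * α) := by
    rw [← hLr, ← hgam]; exact le_trans hmono hup
  have : c ^ 2 / 4 * m ≤ C * r ^ ε := le_of_mul_le_mul_right hkey hr2α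
  linarith
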